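/- There exists a positive constant c such that for all integers n ≥ k ≥ 2, n(n−1)/(k(k−1)) ≤ m̄(n, k) ≤ c · n(n−1)/(k(k−1)). -/

import Mathlib

/-- A set `T` of vertices of a hypergraph with edge set `E` is affinely closed iff
every edge sharing at least two vertices with `T` is fully contained in `T`. -/
def AffClosed {α : Type*} (E : Set (Set α)) (T : Set α) : Prop :=
  ∀ e ∈ E, 2 ≤ (e ∩ T).ncard → e ⊆ T

/-- The affine closure of a set `S`: the intersection of all affinely closed
supersets of `S`. -/
def affCl {α : Type*} (E : Set (Set α)) (S : Set α) : Set α :=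
  ⋂₀ {T | S ⊆ T ∧ AffClosed E T}

/-- The closure-lines of a hypergraph: the sets `aff {u, v}` for distinct `u, v`. -/
def closureLines {α : Type*} (E : Set (Set α)) : Set (Set α) :=
  {L | ∃ u v : α, u ≠ v ∧ L = affCl E {u, v}}

/-- `mbar n k` is the smallest number of distinct closure-lines in a hypergraph on
`n` vertices in which every closure-line consists of at most `k` vertices. -/
noncomputable def mbar (n k : ℕ) : ℕ :=
  sInf { m | ∃ E : Set (Set (Fin n)),
    (∀ L ∈ closureLines E, L.ncard ≤ k) ∧ (closureLines E).ncard = m }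

namespace SCaux
open scoped Classical

lemma subset_affCl {α : Type*} (E : Set (Set α)) (S : Set α) : S ⊆ affCl E S := by
  intro x hx
  exact Set.mem_sInter.2 fun T hT => hT.1 hx

lemma affCl_subset {α : Type*} {E : Set (Set α)} {S T : Set α}
    (h1 : S ⊆ T) (h2 : AffClosed E T) : affCl E S ⊆ T :=
  Set.sInter_subset_of_mem ⟨h1, h2⟩

lemma affCl_empty {α : Type*} (S : Set α) : affCl (∅ : Set (Set α)) S = S := by
  refine le_antisymm ?_ (subset_affCl _ _)
  exact affCl_subset le_rfl (fun e he => absurd he (Set.notMem_empty e))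

section Count

variable {n : ℕ} (E : Set (Set (Fin n)))

noncomputable def lineMap : Fin n × Fin n → Set (Fin n) := fun uv => affCl E {uv.1, uv.2}

noncomputable def linesFinset : Finset (Set (Fin n)) :=
  (Finset.univ.offDiag).image (lineMap E)

lemma closureLines_eq_coe : closureLines E = ↑(linesFinset E) := by
  ext L
  simp only [closureLines, Set.mem_setOf_eq, linesFinset, Finset.coe_image, Set.mem_image,
    Finset.mem_coe, Finset.mem_offDiag]
  constructor
  · rintro ⟨u, v, huv, rfl⟩
    exact ⟨(u, v), ⟨Finset.mem_univ _, Finset.mem_univ _, huv⟩, rfl⟩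
  · rintro ⟨⟨u, v⟩, ⟨-, -, huv⟩, rfl⟩
    exact ⟨u, v, huv, rfl⟩

lemma ncard_closureLines : (closureLines E).ncard = (linesFinset E).card := by
  rw [closureLines_eq_coe, Set.ncard_coe_finset]

lemma ncard_closureLines_le : (closureLines E).ncard ≤ n * n - n := by
  rw [ncard_closureLines]
  calc (linesFinset E).card ≤ (Finset.univ.offDiag : Finset (Fin n × Fin n)).card :=
        Finset.card_image_le
    _ = n * n - n := by rw [Finset.offDiag_card, Finset.card_univ, Fintype.card_fin]

lemma lower_count {k : ℕ} (hE : ∀ L ∈ closureLines E, L.ncard ≤ k) :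
    n * n - n ≤ (closureLines E).ncard * (k * k - k) := by
  rw [ncard_closureLines]
  have hcard : (Finset.univ.offDiag : Finset (Fin n × Fin n)).card
      = ∑ L ∈ linesFinset E, ((Finset.univ.offDiag).filter (fun uv => lineMap E uv = L)).card :=
    Finset.card_eq_sum_card_image (lineMap E) _
  have hfib : ∀ L ∈ linesFinset E,
      ((Finset.univ.offDiag).filter (fun uv => lineMap E uv = L)).card ≤ k * k - k := by
    intro L hL
    have hLmem : L ∈ closureLines E := by
      rw [closureLines_eq_coe]; exact hL
    have hLk : L.ncard ≤ k := hE L hLmem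
    have hfin : L.Finite := Set.toFinite L
    have hsub : (Finset.univ.offDiag).filter (fun uv => lineMap E uv = L)
        ⊆ (hfin.toFinset).offDiag := by
      intro uv huv
      rw [Finset.mem_filter, Finset.mem_offDiag] at huv
      obtain ⟨⟨-, -, hne⟩, hmap⟩ := huv
      rw [Finset.mem_offDiag]
      have h1 : uv.1 ∈ L := by
        rw [← hmap]; exact subset_affCl E _ (by simp)
      have h2 : uv.2 ∈ L := by
        rw [← hmap]; exact subset_affCl E _ (by simp)
      exact ⟨hfin.mem_toFinset.2 h1, hfin.mem_toFinset.2 h2, hne⟩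
    calc ((Finset.univ.offDiag).filter (fun uv => lineMap E uv = L)).card
        ≤ (hfin.toFinset).offDiag.card := Finset.card_le_card hsub
      _ = (hfin.toFinset).card * (hfin.toFinset).card - (hfin.toFinset).card :=
          Finset.offDiag_card _
      _ ≤ k * k - k := by
          have hc : (hfin.toFinset).card ≤ k := by
            rw [← Set.ncard_eq_toFinset_card L hfin]; exact hLk
          have key : ∀ m : ℕ, m * m - m = m * (m - 1) := fun m => by
            rcases m with _ | p
            · rfl
            · simp [Nat.succ_sub_one, Nat.mul_succ]
          rw [key, key]
          exact Nat.mul_le_mul hc (by omega)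
  calc n * n - n = (Finset.univ.offDiag : Finset (Fin n × Fin n)).card := by
        rw [Finset.offDiag_card, Finset.card_univ, Fintype.card_fin]
    _ = _ := hcard
    _ ≤ (linesFinset E).card * (k * k - k) := by
        have := Finset.sum_le_card_nsmul (linesFinset E)
          (fun L => ((Finset.univ.offDiag).filter (fun uv => lineMap E uv = L)).card)
          (k * k - k) hfib
        simpa [smul_eq_mul] using this

end Count

/-- membership of the trivial construction in the mbar-defining set -/
lemma mbar_set_nonempty (n k : ℕ) (hk : 2 ≤ k) :
    { m | ∃ E : Set (Set (Fin n)),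
      (∀ L ∈ closureLines E, L.ncard ≤ k) ∧ (closureLines E).ncard = m }.Nonempty := by
  refine ⟨(closureLines (∅ : Set (Set (Fin n)))).ncard, ∅, ?_, rfl⟩
  rintro L ⟨u, v, huv, rfl⟩
  rw [affCl_empty, Set.ncard_pair huv]
  exact hk

end SCaux

namespace SCaux

section STS

variable {m : ℕ}

/-- the inverse of 2 in `ZMod m` for odd `m` -/
def i2 (m : ℕ) : ZMod m := ((m + 1) / 2 : ℕ)

lemma two_i2 (hm : m % 2 = 1) : (2 : ZMod m) * i2 m = 1 := by
  have h2 : 2 * ((m + 1) / 2) = m + 1 := by omega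
  have : ((2 * ((m + 1) / 2) : ℕ) : ZMod m) = ((m + 1 : ℕ) : ZMod m) := by rw [h2]
  push_cast at this
  rw [ZMod.natCast_self] at this
  simpa [i2] using this

lemma cancel2 (hm : m % 2 = 1) {x y : ZMod m} (h : 2 * x = 2 * y) : x = y := by
  have h1 := congrArg (fun z => i2 m * z) h
  simp only [← mul_assoc, mul_comm (i2 m) 2, two_i2 hm, one_mul] at h1
  exact h1

/-- third point of the Bose Steiner triple system on `ZMod m × ZMod 3` -/
def th (A B : ZMod m × ZMod 3) : ZMod m × ZMod 3 :=
  if A.2 = B.2 then (i2 m * (A.1 + B.1), A.2 + 1)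
  else if A.1 = B.1 then (A.1, -(A.2 + B.2))
  else if B.2 = A.2 + 1 then (2 * B.1 - A.1, A.2)
  else (2 * A.1 - B.1, B.2)

-- ZMod 3 facts
lemma z3_succ_ne (i : ZMod 3) : i + 1 ≠ i := by revert i; decide
lemma z3_trich (i j : ZMod 3) : i = j ∨ j = i + 1 ∨ i = j + 1 := by revert i j; decide
lemma z3_nsucc_succ (i : ZMod 3) : ¬ (i = (i + 1) + 1) := by revert i; decide
lemma z3_neg_ne_left (i j : ZMod 3) (h : i ≠ j) : -(i + j) ≠ i := by revert i j; decide
lemma z3_neg_ne_right (i j : ZMod 3) (h : i ≠ j) : -(i + j) ≠ j := by revert i j; decide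
lemma z3_neg_cancel (i j : ZMod 3) : -(i + -(i + j)) = j := by revert i j; decide

-- evaluation lemmas
lemma th_eval_same (x y : ZMod m) (i : ZMod 3) :
    th (x, i) (y, i) = (i2 m * (x + y), i + 1) := by simp [th]

lemma th_eval_vert (x : ZMod m) {i j : ZMod 3} (hij : i ≠ j) :
    th (x, i) (x, j) = (x, -(i + j)) := by simp [th, hij]

lemma th_eval_up {x y : ZMod m} (hxy : x ≠ y) (i : ZMod 3) :
    th (x, i) (y, i + 1) = (2 * y - x, i) := by
  have hij : i ≠ i + 1 := fun h => z3_succ_ne i h.symm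
  simp [th, hij, hxy]

lemma th_eval_down {x y : ZMod m} (hxy : x ≠ y) {i j : ZMod 3} (hij : i ≠ j)
    (hji : ¬ j = i + 1) : th (x, i) (y, j) = (2 * x - y, j) := by
  simp [th, hij, hxy, hji]

variable (hm : m % 2 = 1)
include hm

lemma th_comm (A B : ZMod m × ZMod 3) : th A B = th B A := by
  obtain ⟨x, i⟩ := A
  obtain ⟨y, j⟩ := B
  rcases eq_or_ne i j with hij | hij
  · subst hij
    rw [th_eval_same, th_eval_same, add_comm x y]
  · rcases eq_or_ne x y with hxy | hxy
    · subst hxy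
      rw [th_eval_vert x hij, th_eval_vert x (Ne.symm hij), add_comm i j]
    · rcases z3_trich i j with h | h | h
      · exact absurd h hij
      · -- j = i + 1
        subst h
        rw [th_eval_up hxy i, th_eval_down (Ne.symm hxy) (z3_succ_ne i) (z3_nsucc_succ i)]
      · -- i = j + 1
        subst h
        rw [th_eval_up (Ne.symm hxy) j, th_eval_down hxy (z3_succ_ne j) (z3_nsucc_succ j)]

lemma th_th {A B : ZMod m × ZMod 3} (hAB : A ≠ B) : th A (th A B) = B := by
  obtain ⟨x, i⟩ := A
  obtain ⟨y, j⟩ := B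
  rcases eq_or_ne i j with hij | hij
  · subst hij
    have hxy : x ≠ y := fun h => hAB (by rw [h])
    rw [th_eval_same]
    have hfst : x ≠ i2 m * (x + y) := by
      intro h
      apply hxy
      linear_combination 2 * h + (x + y) * two_i2 hm
    rw [th_eval_up hfst i]
    have : 2 * (i2 m * (x + y)) - x = y := by
      linear_combination (x + y) * two_i2 hm
    rw [this]
  · rcases eq_or_ne x y with hxy | hxy
    · subst hxy
      rw [th_eval_vert x hij]
      have hlev : i ≠ -(i + j) := fun h => z3_neg_ne_left i j hij h.symm
      rw [th_eval_vert x hlev, z3_neg_cancel]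
    · rcases z3_trich i j with h | h | h
      · exact absurd h hij
      · -- j = i + 1
        subst h
        rw [th_eval_up hxy i]
        have hfst : x ≠ 2 * y - x := by
          intro h
          exact hxy (cancel2 hm (by linear_combination h))
        rw [th_eval_same]
        have : i2 m * (x + (2 * y - x)) = y := by
          linear_combination y * two_i2 hm
        rw [this]
      · -- i = j + 1
        have hji : ¬ (j = i + 1) := by rw [h]; exact z3_nsucc_succ j
        rw [th_eval_down hxy hij hji]
        have hfst : x ≠ 2 * x - y := by
          intro hh
          exact hxy (by linear_combination -hh)
        rw [th_eval_down hfst hij hji]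
        have : 2 * x - (2 * x - y) = y := by ring
        rw [this]

lemma th_ne_left {A B : ZMod m × ZMod 3} (hAB : A ≠ B) : th A B ≠ A := by
  obtain ⟨x, i⟩ := A
  obtain ⟨y, j⟩ := B
  rcases eq_or_ne i j with hij | hij
  · subst hij
    rw [th_eval_same]
    intro h
    exact z3_succ_ne i (congrArg Prod.snd h)
  · rcases eq_or_ne x y with hxy | hxy
    · subst hxy
      rw [th_eval_vert x hij]
      intro h
      exact z3_neg_ne_left i j hij (congrArg Prod.snd h)
    · rcases z3_trich i j with h | h | h
      · exact absurd h hij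
      · subst h
        rw [th_eval_up hxy i]
        intro hh
        have h1 : 2 * y - x = x := congrArg Prod.fst hh
        have h2 : y = x := cancel2 hm (by linear_combination h1)
        exact hxy h2.symm
      · have hji : ¬ (j = i + 1) := by rw [h]; exact z3_nsucc_succ j
        rw [th_eval_down hxy hij hji]
        intro hh
        exact hij (Eq.symm (congrArg Prod.snd hh))

lemma th_ne_right {A B : ZMod m × ZMod 3} (hAB : A ≠ B) : th A B ≠ B := by
  rw [th_comm hm]
  exact th_ne_left hm (Ne.symm hAB)

lemma th_rot {A B C : ZMod m × ZMod 3} (hAB : A ≠ B) (h : th A B = C) : th B C = A := by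
  rw [← h, th_comm hm A B]
  exact th_th hm (Ne.symm hAB)

/-- two points of a triple determine it: third point from any two distinct points of
`{a, b, th a b}` stays in the triple -/
lemma th_mem_triple {a b d e : ZMod m × ZMod 3} (hab : a ≠ b)
    (hd : d ∈ ({a, b, th a b} : Set _)) (he : e ∈ ({a, b, th a b} : Set _)) (hde : d ≠ e) :
    th d e ∈ ({a, b, th a b} : Set _) := by
  have hc := rfl (a := th a b)
  have hba : th b a = th a b := th_comm hm b a
  have h1 : th a (th a b) = b := th_th hm hab
  have h2 : th b (th a b) = a := th_rot hm hab rfl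
  have h3 : th (th a b) a = b := by rw [th_comm hm]; exact h1
  have h4 : th (th a b) b = a := by rw [th_comm hm]; exact h2
  simp only [Set.mem_insert_iff, Set.mem_singleton_iff] at hd he ⊢
  rcases hd with rfl | rfl | rfl <;> rcases he with rfl | rfl | rfl
  · exact absurd rfl hde
  · right; right; rfl
  · right; left; exact h1
  · right; right; exact hba
  · exact absurd rfl hde
  · left; exact h2
  · right; left; exact h3
  · left; exact h4
  · exact absurd rfl hde

end STS

end SCaux

namespace SCaux

section Blowup

variable {m : ℕ} (hm : m % 2 = 1) {n : ℕ} (f : Fin n → ZMod m × ZMod 3)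

/-- admissible symbol triples -/
def Ok (a b c : ZMod m × ZMod 3) : Prop := (a = b ∧ b = c) ∨ (a ≠ b ∧ th a b = c)

/-- the blow-up hypergraph -/
def EE : Set (Set (Fin n)) :=
  { e | ∃ x y z : Fin n, x ≠ y ∧ x ≠ z ∧ y ≠ z ∧ Ok (f x) (f y) (f z) ∧ e = {x, y, z} }

include hm

lemma Ok_swap {a b c : ZMod m × ZMod 3} (h : Ok a b c) : Ok b a c := by
  rcases h with ⟨h1, h2⟩ | ⟨h1, h2⟩
  · exact Or.inl ⟨h1.symm, h1 ▸ h2⟩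
  · exact Or.inr ⟨Ne.symm h1, by rw [th_comm hm]; exact h2⟩

lemma Ok_rot {a b c : ZMod m × ZMod 3} (h : Ok a b c) : Ok b c a := by
  rcases h with ⟨h1, h2⟩ | ⟨h1, h2⟩
  · exact Or.inl ⟨h2, h2 ▸ h1.symm⟩
  · refine Or.inr ⟨?_, th_rot hm h1 h2⟩
    rw [← h2]
    exact Ne.symm (th_ne_right hm h1)

lemma preimage_closed (S : Set (ZMod m × ZMod 3))
    (hS : ∀ d e c, Ok d e c → d ∈ S → e ∈ S → c ∈ S) :
    AffClosed (EE f) (f ⁻¹' S) := by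
  intro e he h2
  obtain ⟨x, y, z, hxy, hxz, hyz, hOk, rfl⟩ := he
  have hfin : (({x, y, z} : Set (Fin n)) ∩ f ⁻¹' S).Finite := Set.toFinite _
  obtain ⟨p, q, hp, hq, hpq⟩ := (Set.one_lt_ncard_iff hfin).1 (by omega)
  obtain ⟨hpm, hpS⟩ := hp
  obtain ⟨hqm, hqS⟩ := hq
  have r1 : Ok (f y) (f z) (f x) := Ok_rot hm hOk
  have r2 : Ok (f z) (f x) (f y) := Ok_rot hm r1
  have s0 : Ok (f y) (f x) (f z) := Ok_swap hm hOk
  have s1 : Ok (f z) (f y) (f x) := Ok_swap hm r1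
  have s2 : Ok (f x) (f z) (f y) := Ok_swap hm r2
  have key : f x ∈ S ∧ f y ∈ S ∧ f z ∈ S := by
    simp only [Set.mem_insert_iff, Set.mem_singleton_iff] at hpm hqm
    have hpS' : f p ∈ S := hpS
    have hqS' : f q ∈ S := hqS
    rcases hpm with rfl | rfl | rfl <;> rcases hqm with rfl | rfl | rfl
    · exact absurd rfl hpq
    · exact ⟨hpS', hqS', hS _ _ _ hOk hpS' hqS'⟩
    · exact ⟨hpS', hS _ _ _ s2 hpS' hqS', hqS'⟩
    · exact ⟨hqS', hpS', hS _ _ _ s0 hpS' hqS'⟩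
    · exact absurd rfl hpq
    · exact ⟨hS _ _ _ r1 hpS' hqS', hpS', hqS'⟩
    · exact ⟨hqS', hS _ _ _ r2 hpS' hqS', hpS'⟩
    · exact ⟨hS _ _ _ s1 hpS' hqS', hqS', hpS'⟩
    · exact absurd rfl hpq
  intro w hw
  simp only [Set.mem_insert_iff, Set.mem_singleton_iff] at hw
  rcases hw with rfl | rfl | rfl
  · exact key.1
  · exact key.2.1
  · exact key.2.2

lemma part_closed (a : ZMod m × ZMod 3) : AffClosed (EE f) (f ⁻¹' {a}) := by
  apply preimage_closed hm f
  rintro d e c (⟨h1, h2⟩ | ⟨h1, h2⟩) hd he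
  · simp only [Set.mem_singleton_iff] at *
    rw [← h2, ← h1]; exact hd
  · simp only [Set.mem_singleton_iff] at hd he
    exact absurd (hd.trans he.symm) h1

lemma tri_closed {a b : ZMod m × ZMod 3} (hab : a ≠ b) :
    AffClosed (EE f) (f ⁻¹' {a, b, th a b}) := by
  apply preimage_closed hm f
  rintro d e c (⟨h1, h2⟩ | ⟨h1, h2⟩) hd he
  · rw [← h2, ← h1]; exact hd
  · rw [← h2]
    exact th_mem_triple hm hab hd he h1

/-- forcing step -/
lemma force {T : Set (Fin n)} (hcl : AffClosed (EE f) T) {p q r : Fin n}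
    (hpq : p ≠ q) (hpr : p ≠ r) (hqr : q ≠ r) (hOk : Ok (f p) (f q) (f r))
    (hp : p ∈ T) (hq : q ∈ T) : r ∈ T := by
  have he : ({p, q, r} : Set (Fin n)) ∈ EE f := ⟨p, q, r, hpq, hpr, hqr, hOk, rfl⟩
  have hsub : ({p, q} : Set (Fin n)) ⊆ {p, q, r} ∩ T := by
    intro w hw
    rcases hw with rfl | rfl
    · exact ⟨by simp, hp⟩
    · exact ⟨by simp, hq⟩
  have h2 : 2 ≤ (({p, q, r} : Set (Fin n)) ∩ T).ncard := by
    calc 2 = ({p, q} : Set (Fin n)).ncard := (Set.ncard_pair hpq).symm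
      _ ≤ _ := Set.ncard_le_ncard hsub (Set.toFinite _)
  exact hcl _ he h2 (by simp)

lemma affCl_same {p q : Fin n} (hpq : p ≠ q) (hf : f p = f q) :
    affCl (EE f) {p, q} = f ⁻¹' {f p} := by
  refine le_antisymm ?_ ?_
  · refine affCl_subset ?_ (part_closed hm f (f p))
    intro w hw
    rcases hw with rfl | rfl
    · simp
    · simp [← hf]
  · intro w hw
    simp only [Set.mem_preimage, Set.mem_singleton_iff] at hw
    refine Set.mem_sInter.2 fun T hT => ?_
    obtain ⟨hsubT, hclT⟩ := hT
    have hp : p ∈ T := hsubT (by simp)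
    have hq : q ∈ T := hsubT (by simp)
    by_cases hwp : w = p
    · exact hwp ▸ hp
    by_cases hwq : w = q
    · exact hwq ▸ hq
    refine force hm f hclT hpq (Ne.symm hwp) (Ne.symm hwq) ?_ hp hq
    exact Or.inl ⟨hf, by rw [← hf, hw]⟩

lemma affCl_cross (hsurj : Function.Surjective f) {p q : Fin n} (hpq : p ≠ q)
    (hf : f p ≠ f q) :
    affCl (EE f) {p, q} = f ⁻¹' {f p, f q, th (f p) (f q)} := by
  set a := f p with ha
  set b := f q with hb
  set c := th a b with hc
  refine le_antisymm ?_ ?_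
  · refine affCl_subset ?_ (tri_closed hm f hf)
    intro w hw
    rcases hw with rfl | rfl
    · simp [Set.mem_preimage, ha]
    · simp only [Set.mem_preimage, ← hb]
      right; left; rfl
  · intro w hw
    simp only [Set.mem_preimage, Set.mem_insert_iff, Set.mem_singleton_iff] at hw
    refine Set.mem_sInter.2 fun T hT => ?_
    obtain ⟨hsubT, hclT⟩ := hT
    have hp : p ∈ T := hsubT (by simp)
    have hq : q ∈ T := hsubT (by simp)
    have hca : c ≠ a := th_ne_left hm hf
    have hcb : c ≠ b := th_ne_right hm hf
    obtain ⟨z₀, hz₀⟩ := hsurj c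
    have hz₀p : p ≠ z₀ := fun h => hca (by rw [← hz₀, ← h])
    have hz₀q : q ≠ z₀ := fun h => hcb (by rw [← hz₀, ← h])
    have hz₀T : z₀ ∈ T :=
      force hm f hclT hpq hz₀p hz₀q (Or.inr ⟨hf, by rw [hz₀]⟩) hp hq
    rcases hw with hwa | hwb | hwc
    · -- f w = a
      by_cases hwp : w = p
      · exact hwp ▸ hp
      have hqw : q ≠ w := fun h => hf (by rw [ha, hb, h, hwa])
      have hzw : z₀ ≠ w := fun h => hca (by rw [← hz₀, h, hwa])
      refine force hm f hclT hz₀q hqw hzw ?_ hq hz₀T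
      refine Or.inr ⟨?_, ?_⟩
      · rw [hz₀, ← hb]; exact Ne.symm hcb
      · rw [hz₀, hwa, ← hb]
        exact th_rot hm hf rfl
    · -- f w = b
      by_cases hwq : w = q
      · exact hwq ▸ hq
      have hpw : p ≠ w := fun h => hf (by rw [ha, hb, h, hwb])
      have hzw : z₀ ≠ w := fun h => hcb (by rw [← hz₀, h, hwb])
      refine force hm f hclT hz₀p hpw hzw ?_ hp hz₀T
      refine Or.inr ⟨?_, ?_⟩
      · rw [hz₀, ← ha]; exact Ne.symm hca
      · rw [hz₀, hwb, ← ha]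
        exact th_th hm hf
    · -- f w = c
      have hpw : p ≠ w := fun h => hca (by rw [← hwc, ← h])
      have hqw : q ≠ w := fun h => hcb (by rw [← hwc, ← h])
      refine force hm f hclT hpq hpw hqw ?_ hp hq
      exact Or.inr ⟨hf, by rw [hwc]⟩

lemma closureLines_blowup_sub (hsurj : Function.Surjective f) :
    closureLines (EE f) ⊆
      (Set.range fun a : ZMod m × ZMod 3 => f ⁻¹' {a}) ∪
      (Set.range fun ab : (ZMod m × ZMod 3) × (ZMod m × ZMod 3) =>
        f ⁻¹' {ab.1, ab.2, th ab.1 ab.2}) := by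
  rintro L ⟨u, v, huv, rfl⟩
  by_cases hf : f u = f v
  · left
    exact ⟨f u, (affCl_same hm f huv hf).symm⟩
  · right
    exact ⟨(f u, f v), (affCl_cross hm f hsurj huv hf).symm⟩

lemma blowup_count [NeZero m] (hsurj : Function.Surjective f) :
    (closureLines (EE f)).ncard ≤ 3 * m + 9 * (m * m) := by
  have hcard : Fintype.card (ZMod m × ZMod 3) = 3 * m := by
    rw [Fintype.card_prod, ZMod.card, ZMod.card]; ring
  calc (closureLines (EE f)).ncard
      ≤ ((Set.range fun a : ZMod m × ZMod 3 => f ⁻¹' {a}) ∪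
        (Set.range fun ab : (ZMod m × ZMod 3) × (ZMod m × ZMod 3) =>
          f ⁻¹' {ab.1, ab.2, th ab.1 ab.2})).ncard :=
        Set.ncard_le_ncard (closureLines_blowup_sub hm f hsurj) (Set.toFinite _)
    _ ≤ (Set.range fun a : ZMod m × ZMod 3 => f ⁻¹' {a}).ncard +
        (Set.range fun ab : (ZMod m × ZMod 3) × (ZMod m × ZMod 3) =>
          f ⁻¹' {ab.1, ab.2, th ab.1 ab.2}).ncard := Set.ncard_union_le _ _
    _ ≤ 3 * m + 9 * (m * m) := by
        have h1 : (Set.range fun a : ZMod m × ZMod 3 => f ⁻¹' {a}).ncard ≤ 3 * m := by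
          calc _ ≤ (Set.univ : Set (ZMod m × ZMod 3)).ncard := by
                rw [← Set.image_univ]
                exact Set.ncard_image_le (Set.toFinite _)
            _ = 3 * m := by rw [Set.ncard_univ, Nat.card_eq_fintype_card, hcard]
        have h2 : (Set.range fun ab : (ZMod m × ZMod 3) × (ZMod m × ZMod 3) =>
            f ⁻¹' {ab.1, ab.2, th ab.1 ab.2}).ncard ≤ 9 * (m * m) := by
          calc _ ≤ (Set.univ : Set ((ZMod m × ZMod 3) × (ZMod m × ZMod 3))).ncard := by
                rw [← Set.image_univ]
                exact Set.ncard_image_le (Set.toFinite _)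
            _ = 9 * (m * m) := by
                rw [Set.ncard_univ, Nat.card_eq_fintype_card, Fintype.card_prod, hcard]
                ring
        omega

lemma blowup_sizes {B k : ℕ} (hsurj : Function.Surjective f)
    (hfib : ∀ a, (f ⁻¹' {a}).ncard ≤ B) (h3B : 3 * B ≤ k) :
    ∀ L ∈ closureLines (EE f), L.ncard ≤ k := by
  rintro L ⟨u, v, huv, rfl⟩
  by_cases hf : f u = f v
  · rw [affCl_same hm f huv hf]
    calc (f ⁻¹' {f u}).ncard ≤ B := hfib _
      _ ≤ k := by omega
  · rw [affCl_cross hm f hsurj huv hf]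
    have hsplit : f ⁻¹' ({f u, f v, th (f u) (f v)} : Set _) =
        f ⁻¹' {f u} ∪ (f ⁻¹' {f v} ∪ f ⁻¹' {th (f u) (f v)}) := by
      rw [← Set.preimage_union, ← Set.preimage_union]
      rfl
    rw [hsplit]
    calc (f ⁻¹' {f u} ∪ (f ⁻¹' {f v} ∪ f ⁻¹' {th (f u) (f v)})).ncard
        ≤ (f ⁻¹' {f u}).ncard + (f ⁻¹' {f v} ∪ f ⁻¹' {th (f u) (f v)}).ncard :=
          Set.ncard_union_le _ _
      _ ≤ (f ⁻¹' {f u}).ncard + ((f ⁻¹' {f v}).ncard + (f ⁻¹' {th (f u) (f v)}).ncard) := by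
          have := Set.ncard_union_le (f ⁻¹' {f v}) (f ⁻¹' {th (f u) (f v)})
          omega
      _ ≤ B + (B + B) := by
          have := hfib (f u); have := hfib (f v); have := hfib (th (f u) (f v)); omega
      _ ≤ k := by omega

end Blowup

end SCaux

namespace SCaux

lemma upper_large {n k : ℕ} (h1001 : 1001 ≤ k) (hkn : k ≤ n) :
    mbar n k * (k * (k - 1)) ≤ 1000000 * (n * (n - 1)) := by
  have hk0 : 0 < k := by omega
  set u := (n + k - 1) / k with hu
  have hdm := Nat.div_add_mod (n + k - 1) k
  have hmod := Nat.mod_lt (n + k - 1) hk0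
  rw [← hu] at hdm
  have hn_le : n ≤ k * u := by omega
  have hku : k * u ≤ n + k - 1 := by omega
  have h1001u : 1001 * u ≤ k * u := Nat.mul_le_mul_right u h1001
  have hu1 : 1 ≤ u := by
    by_contra h
    have h0 : u = 0 := by omega
    rw [h0, Nat.mul_zero] at hn_le
    omega
  set M := 2 * u + 1 with hM
  haveI : NeZero M := ⟨by omega⟩
  have hModd : M % 2 = 1 := by omega
  set t := 3 * M with ht
  have htpos : 0 < t := by omega
  have hcardSym : Fintype.card (ZMod M × ZMod 3) = t := by
    rw [Fintype.card_prod, ZMod.card, ZMod.card]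
    omega
  have htn : t ≤ n := by omega
  set d := n / t with hd
  set B := d + 1 with hB
  have hdt : d * t ≤ n := Nat.div_mul_le_self n t
  have e2 : d * t = 6 * (u * d) + 3 * d := by rw [ht, hM]; ring
  have h6d : u * (6 * d) ≤ u * k := by
    calc u * (6 * d) = 6 * (u * d) := by ring
      _ ≤ n := by omega
      _ ≤ k * u := hn_le
      _ = u * k := Nat.mul_comm k u
  have h6d' : 6 * d ≤ k := Nat.le_of_mul_le_mul_left h6d (by omega)
  have h3B : 3 * B ≤ k := by omega
  have htk : t * k ≤ 15 * n := by
    have e3 : t * k = 6 * (k * u) + 3 * k := by rw [ht, hM]; ring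
    omega
  -- the concrete part map
  set eqv : (ZMod M × ZMod 3) ≃ Fin t :=
    (Fintype.equivFin (ZMod M × ZMod 3)).trans (finCongr hcardSym) with heqv
  set f : Fin n → ZMod M × ZMod 3 :=
    fun x => eqv.symm ⟨x.val % t, Nat.mod_lt _ htpos⟩ with hf
  have hsurj : Function.Surjective f := by
    intro a
    refine ⟨⟨(eqv a).val, lt_of_lt_of_le (eqv a).isLt htn⟩, ?_⟩
    simp only [hf]
    rw [Equiv.symm_apply_eq]
    exact Fin.ext (Nat.mod_eq_of_lt (eqv a).isLt)
  have hfib : ∀ a, (f ⁻¹' {a}).ncard ≤ B := by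
    intro a
    have hbnd : ∀ x : Fin n, x.val / t < B := by
      intro x
      have h1 : x.val / t ≤ n / t := Nat.div_le_div_right (le_of_lt x.isLt)
      omega
    have hinj : Set.InjOn (fun x : Fin n => (⟨x.val / t, hbnd x⟩ : Fin B))
        (f ⁻¹' {a}) := by
      intro x hx y hy hxy
      simp only [Set.mem_preimage, Set.mem_singleton_iff, hf] at hx hy
      have hmodeq : x.val % t = y.val % t := by
        have h2 := eqv.symm.injective (hx.trans hy.symm)
        exact congrArg Fin.val h2
      have hdiveq : x.val / t = y.val / t := by
        simpa using congrArg Fin.val hxy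
      have hx' := Nat.div_add_mod x.val t
      have hy' := Nat.div_add_mod y.val t
      rw [hdiveq] at hx'
      exact Fin.ext (by omega)
    calc (f ⁻¹' {a}).ncard ≤ (Set.univ : Set (Fin B)).ncard := by
          refine Set.ncard_le_ncard_of_injOn _ ?_ hinj (Set.toFinite _)
          exact fun x _ => trivial
      _ = B := by rw [Set.ncard_univ, Nat.card_eq_fintype_card, Fintype.card_fin]
  have hsizes := blowup_sizes hModd f hsurj hfib h3B
  have hcount := blowup_count hModd f hsurj
  have hmem : (closureLines (EE f)).ncard ∈ { m | ∃ E : Set (Set (Fin n)),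
      (∀ L ∈ closureLines E, L.ncard ≤ k) ∧ (closureLines E).ncard = m } :=
    ⟨EE f, hsizes, rfl⟩
  have hmbar : mbar n k ≤ (closureLines (EE f)).ncard := Nat.sInf_le hmem
  -- arithmetic finish
  have e4 : 3 * M + 9 * (M * M) = t + t * t := by rw [ht]; ring
  have htt : t ≤ t * t := Nat.le_mul_of_pos_left t htpos
  have hcnt2 : mbar n k ≤ 2 * (t * t) := by omega
  have hkk : k * (k - 1) ≤ k * k := Nat.mul_le_mul_left k (by omega)
  have hfinal : mbar n k * (k * (k - 1)) ≤ 450 * (n * n) := by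
    calc mbar n k * (k * (k - 1)) ≤ (2 * (t * t)) * (k * k) := Nat.mul_le_mul hcnt2 hkk
      _ = 2 * ((t * k) * (t * k)) := by ring
      _ ≤ 2 * ((15 * n) * (15 * n)) := by
          have := Nat.mul_le_mul htk htk
          omega
      _ = 450 * (n * n) := by ring
  have e7 : n * (n - 1) = n * n - n := by
    rcases n with _ | p
    · rfl
    · simp [Nat.succ_sub_one, Nat.mul_succ]
  have h2n : 2 * n ≤ n * n := Nat.mul_le_mul_right n (by omega)
  omega

end SCaux

namespace SCaux

lemma sq_sub (m : ℕ) : m * m - m = m * (m - 1) := by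
  rcases m with _ | p
  · rfl
  · simp [Nat.succ_sub_one, Nat.mul_succ]

lemma upper_nat {n k : ℕ} (hk2 : 2 ≤ k) (hkn : k ≤ n) :
    mbar n k * (k * (k - 1)) ≤ 1000000 * (n * (n - 1)) := by
  by_cases hbig : 1001 ≤ k
  · exact upper_large hbig hkn
  · -- small k : use the empty hypergraph
    have hmem : (closureLines (∅ : Set (Set (Fin n)))).ncard ∈
        { m | ∃ E : Set (Set (Fin n)),
          (∀ L ∈ closureLines E, L.ncard ≤ k) ∧ (closureLines E).ncard = m } := by
      refine ⟨∅, ?_, rfl⟩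
      rintro L ⟨u, v, huv, rfl⟩
      rw [affCl_empty, Set.ncard_pair huv]
      exact hk2
    have h1 : mbar n k ≤ (closureLines (∅ : Set (Set (Fin n)))).ncard := Nat.sInf_le hmem
    have h2 : (closureLines (∅ : Set (Set (Fin n)))).ncard ≤ n * n - n :=
      ncard_closureLines_le _
    have h3 : mbar n k ≤ n * (n - 1) := by
      rw [← sq_sub]; omega
    have h4 : k * (k - 1) ≤ 1000000 := by
      have : k * (k - 1) ≤ 1000 * 1000 :=
        Nat.mul_le_mul (by omega) (by omega)
      omega
    calc mbar n k * (k * (k - 1)) ≤ (n * (n - 1)) * 1000000 := Nat.mul_le_mul h3 h4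
      _ = 1000000 * (n * (n - 1)) := Nat.mul_comm _ _

lemma lower_nat {n k : ℕ} (hk2 : 2 ≤ k) :
    n * (n - 1) ≤ mbar n k * (k * (k - 1)) := by
  obtain ⟨E0, hE0k, hE0c⟩ := Nat.sInf_mem (mbar_set_nonempty n k hk2)
  have h := lower_count E0 hE0k
  rw [hE0c] at h
  rw [← sq_sub, ← sq_sub]
  exact h

end SCaux


/-- There is a positive constant `c` such that
`n(n-1)/(k(k-1)) ≤ m̄(n, k) ≤ c · n(n-1)/(k(k-1))` whenever `n ≥ k ≥ 2`. -/
theorem stmt_14 : ∃ c : ℝ, 0 < c ∧ ∀ n k : ℕ, 2 ≤ k → k ≤ n →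
    ((n : ℝ) * ((n : ℝ) - 1)) / ((k : ℝ) * ((k : ℝ) - 1)) ≤ (mbar n k : ℝ) ∧
    (mbar n k : ℝ) ≤ c * (((n : ℝ) * ((n : ℝ) - 1)) / ((k : ℝ) * ((k : ℝ) - 1))) := by
  refine ⟨1000000, by norm_num, ?_⟩
  intro n k hk2 hkn
  have hn2 : 2 ≤ n := le_trans hk2 hkn
  have hk1 : 1 ≤ k := by omega
  have hn1 : 1 ≤ n := by omega
  have hkR : (2 : ℝ) ≤ (k : ℝ) := by exact_mod_cast hk2
  have hpos : (0 : ℝ) < (k : ℝ) * ((k : ℝ) - 1) := by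
    apply mul_pos <;> linarith
  have hlow := SCaux.lower_nat (n := n) hk2
  have hup := SCaux.upper_nat hk2 hkn
  have hlowR : ((n * (n - 1) : ℕ) : ℝ) ≤ ((mbar n k * (k * (k - 1)) : ℕ) : ℝ) :=
    Nat.cast_le.mpr hlow
  have hupR : ((mbar n k * (k * (k - 1)) : ℕ) : ℝ) ≤ ((1000000 * (n * (n - 1)) : ℕ) : ℝ) :=
    Nat.cast_le.mpr hup
  push_cast [Nat.cast_sub hk1, Nat.cast_sub hn1] at hlowR hupR
  constructor
  · rw [div_le_iff₀ hpos]
    calc (n : ℝ) * ((n : ℝ) - 1) ≤ (mbar n k : ℝ) * ((k : ℝ) * ((k : ℝ) - 1)) := by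
          linarith
      _ = (mbar n k : ℝ) * ((k : ℝ) * ((k : ℝ) - 1)) := rfl
  · rw [← mul_div_assoc, le_div_iff₀ hpos]
    linarith
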